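/- Let X be a real normed space, Y a real Banach space, let p be a real number with 0 ≤ p < 2 and θ ≥ 0. Suppose f : X → Y satisfies f(0) = 0 and ‖D_f(x,y)‖ ≤ θ·(‖x‖^p + ‖y‖^p) for all x, y ∈ X. Then there exist a unique quadratic function Q₁ : X → Y, a unique cubic function C : X → Y and a unique quartic function Q₂ : X → Y such that ‖f(x) − Q₁(x) − C(x) − Q₂(x)‖ ≤ (((33 + 2^p)/9)·(1/(4 − 2^p) + 4/(16 − 2^p)) + 3/(2·(8 − 2^p)))·θ·‖x‖^p for all x ∈ X. -/

import Mathlib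

open Filter Topology

/-- The mixed quadratic-cubic-quartic functional equation (1.5). -/
def MixedEq {X Y : Type*} [AddCommGroup X] [AddCommGroup Y] (f : X → Y) : Prop :=
  ∀ x y : X, 3 • (f (x + 2 • y) + f (x - 2 • y)) =
    12 • (f (x + y) + f (x - y)) + 4 • f (3 • y) - 18 • f (2 • y) + 36 • f y - 18 • f x

/-- The difference operator D_f. -/
def Dop {X Y : Type*} [AddCommGroup X] [AddCommGroup Y] (f : X → Y) (x y : X) : Y :=
  3 • (f (x + 2 • y) + f (x - 2 • y)) - 12 • (f (x + y) + f (x - y))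
    - 4 • f (3 • y) + 18 • f (2 • y) - 36 • f y + 18 • f x

/-- Quadratic functional equation. -/
def IsQuadratic {X Y : Type*} [AddCommGroup X] [AddCommGroup Y] (g : X → Y) : Prop :=
  ∀ x y : X, g (x + y) + g (x - y) = 2 • g x + 2 • g y

/-- Cubic functional equation. -/
def IsCubic {X Y : Type*} [AddCommGroup X] [AddCommGroup Y] (c : X → Y) : Prop :=
  ∀ x y : X, c (2 • x + y) + c (2 • x - y) = 2 • c (x + y) + 2 • c (x - y) + 12 • c x

/-- Quartic functional equation. -/
def IsQuartic {X Y : Type*} [AddCommGroup X] [AddCommGroup Y] (q : X → Y) : Prop :=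
  ∀ x y : X, q (2 • x + y) + q (2 • x - y) = 4 • (q (x + y) + q (x - y)) + 24 • q x - 6 • q y

section Helpers

set_option linter.unusedSectionVars false
set_option linter.unusedVariables false

variable {X Y : Type*} [NormedAddCommGroup X] [NormedSpace ℝ X]
  [NormedAddCommGroup Y] [NormedSpace ℝ Y]

/-- A real-scalar normalization of the difference operator. -/
def DR (f : X → Y) (x y : X) : Y :=
  (3:ℝ) • f (x + (2:ℝ) • y) + (3:ℝ) • f (x - (2:ℝ) • y) - (12:ℝ) • f (x + y)
    - (12:ℝ) • f (x - y) - (4:ℝ) • f ((3:ℝ) • y) + (18:ℝ) • f ((2:ℝ) • y)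
    - (36:ℝ) • f y + (18:ℝ) • f x

lemma DR_eq_Dop (f : X → Y) (x y : X) : DR f x y = Dop f x y := by
  unfold DR Dop
  simp only [← Nat.cast_smul_eq_nsmul ℝ, Nat.cast_ofNat]
  module

lemma norm_two_pow_smul (p : ℝ) (n : ℕ) (x : X) :
    ‖(2:ℝ)^n • x‖^p = ((2:ℝ)^p)^n * ‖x‖^p := by
  rw [norm_smul, Real.norm_eq_abs, abs_of_pos (by positivity),
    Real.mul_rpow (by positivity) (norm_nonneg x)]
  congr 1
  rw [← Real.rpow_natCast (2:ℝ) n, ← Real.rpow_natCast ((2:ℝ)^p) n,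
    ← Real.rpow_mul (by norm_num), ← Real.rpow_mul (by norm_num), mul_comm]

lemma norm_two_smul (p : ℝ) (x : X) : ‖(2:ℝ) • x‖^p = (2:ℝ)^p * ‖x‖^p := by
  rw [norm_smul, Real.norm_eq_abs, abs_of_pos (by norm_num),
    Real.mul_rpow (by norm_num) (norm_nonneg x)]

lemma DR_even_part (f : X → Y) (x y : X) :
    DR (fun z => (2:ℝ)⁻¹ • (f z + f (-z))) x y
      = (2:ℝ)⁻¹ • (DR f x y + DR f (-x) (-y)) := by
  simp only [DR]
  have a1 : -x + (2:ℝ) • -y = -(x + (2:ℝ) • y) := by module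
  have a2 : -x - (2:ℝ) • -y = -(x - (2:ℝ) • y) := by module
  have a3 : -x + -y = -(x + y) := by module
  have a4 : -x - -y = -(x - y) := by module
  have a5 : (3:ℝ) • -y = -((3:ℝ) • y) := by module
  have a6 : (2:ℝ) • -y = -((2:ℝ) • y) := by module
  rw [a1, a2, a3, a4, a5, a6]
  module

lemma DR_odd_part (f : X → Y) (x y : X) :
    DR (fun z => (2:ℝ)⁻¹ • (f z - f (-z))) x y
      = (2:ℝ)⁻¹ • (DR f x y - DR f (-x) (-y)) := by
  simp only [DR]
  have a1 : -x + (2:ℝ) • -y = -(x + (2:ℝ) • y) := by module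
  have a2 : -x - (2:ℝ) • -y = -(x - (2:ℝ) • y) := by module
  have a3 : -x + -y = -(x + y) := by module
  have a4 : -x - -y = -(x - y) := by module
  have a5 : (3:ℝ) • -y = -((3:ℝ) • y) := by module
  have a6 : (2:ℝ) • -y = -((2:ℝ) • y) := by module
  rw [a1, a2, a3, a4, a5, a6]
  module

lemma DR_scale_sub (f : X → Y) (a : ℝ) (x y : X) :
    DR (fun z => f ((2:ℝ) • z) - a • f z) x y
      = DR f ((2:ℝ) • x) ((2:ℝ) • y) - a • DR f x y := by
  simp only [DR]
  have e1 : (2:ℝ) • x + (2:ℝ) • ((2:ℝ) • y) = (2:ℝ) • (x + (2:ℝ) • y) := by module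
  have e2 : (2:ℝ) • x - (2:ℝ) • ((2:ℝ) • y) = (2:ℝ) • (x - (2:ℝ) • y) := by module
  have e3 : (2:ℝ) • x + (2:ℝ) • y = (2:ℝ) • (x + y) := by module
  have e4 : (2:ℝ) • x - (2:ℝ) • y = (2:ℝ) • (x - y) := by module
  have e5 : (3:ℝ) • ((2:ℝ) • y) = (2:ℝ) • ((3:ℝ) • y) := by module
  rw [e1, e2, e3, e4, e5]
  module

lemma zero_of_DR (v : X → Y) (hD : ∀ x y : X, DR v x y = 0) : v 0 = 0 := by
  have e0 := hD 0 0
  simp only [DR, add_zero, smul_zero, zero_add, sub_zero, zero_sub, neg_zero] at e0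
  linear_combination (norm := module) (-1/22 : ℝ) • e0

lemma quadratic_of (v : X → Y) (hD : ∀ x y : X, DR v x y = 0)
    (he : ∀ x, v (-x) = v x) (hs : ∀ x, v ((2:ℝ) • x) = (4:ℝ) • v x) :
    IsQuadratic v := by
  have h0 : v 0 = 0 := zero_of_DR v hD
  have h3 : ∀ x, v ((3:ℝ) • x) = (9:ℝ) • v x := by
    intro x
    have e := hD 0 x
    simp only [DR, zero_add, zero_sub, he, hs, h0, smul_zero] at e
    linear_combination (norm := module) (-1/4 : ℝ) • e
  have hdag : ∀ x y : X, v (x + (2:ℝ) • y) + v (x - (2:ℝ) • y)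
      = (4:ℝ) • v (x + y) + (4:ℝ) • v (x - y) - (6:ℝ) • v x := by
    intro x y
    have e := hD x y
    simp only [DR, hs, h3] at e
    linear_combination (norm := module) (1/3 : ℝ) • e
  intro x y
  have e3 := hdag y x
  have p1 : y + (2:ℝ) • x = (2:ℝ) • x + y := by module
  have p2 : y - (2:ℝ) • x = -((2:ℝ) • x - y) := by module
  have p3 : y + x = x + y := by module
  have p4 : y - x = -(x - y) := by module
  rw [p1, p2, p3, p4, he, he] at e3
  have e4 := hdag ((2:ℝ) • x) y
  have q1 : (2:ℝ) • x + (2:ℝ) • y = (2:ℝ) • (x + y) := by module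
  have q2 : (2:ℝ) • x - (2:ℝ) • y = (2:ℝ) • (x - y) := by module
  rw [q1, q2, hs, hs, hs] at e4
  simp only [← Nat.cast_smul_eq_nsmul ℝ, Nat.cast_ofNat]
  linear_combination (norm := module) (-1/3 : ℝ) • e3 - (1/12 : ℝ) • e4

lemma cubic_of (v : X → Y) (hD : ∀ x y : X, DR v x y = 0)
    (ho : ∀ x, v (-x) = -v x) (hs : ∀ x, v ((2:ℝ) • x) = (8:ℝ) • v x) :
    IsCubic v := by
  have h0 : v 0 = 0 := zero_of_DR v hD
  have h3 : ∀ x, v ((3:ℝ) • x) = (27:ℝ) • v x := by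
    intro x
    have e := hD 0 x
    simp only [DR, zero_add, zero_sub, ho, hs, h0, smul_zero] at e
    linear_combination (norm := module) (-1/4 : ℝ) • e
  have hdag : ∀ x y : X, v (x + (2:ℝ) • y) + v (x - (2:ℝ) • y)
      = (4:ℝ) • v (x + y) + (4:ℝ) • v (x - y) - (6:ℝ) • v x := by
    intro x y
    have e := hD x y
    simp only [DR, hs, h3] at e
    linear_combination (norm := module) (1/3 : ℝ) • e
  intro x y
  have e4 := hdag ((2:ℝ) • x) y
  have q1 : (2:ℝ) • x + (2:ℝ) • y = (2:ℝ) • (x + y) := by module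
  have q2 : (2:ℝ) • x - (2:ℝ) • y = (2:ℝ) • (x - y) := by module
  rw [q1, q2, hs, hs, hs] at e4
  simp only [← Nat.cast_smul_eq_nsmul ℝ, Nat.cast_ofNat]
  linear_combination (norm := module) (-1/4 : ℝ) • e4

lemma quartic_of (v : X → Y) (hD : ∀ x y : X, DR v x y = 0)
    (he : ∀ x, v (-x) = v x) (hs : ∀ x, v ((2:ℝ) • x) = (16:ℝ) • v x) :
    IsQuartic v := by
  have h0 : v 0 = 0 := zero_of_DR v hD
  have h3 : ∀ x, v ((3:ℝ) • x) = (81:ℝ) • v x := by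
    intro x
    have e := hD 0 x
    simp only [DR, zero_add, zero_sub, he, hs, h0, smul_zero] at e
    linear_combination (norm := module) (-1/4 : ℝ) • e
  have hdag : ∀ x y : X, v (x + (2:ℝ) • y) + v (x - (2:ℝ) • y)
      = (4:ℝ) • v (x + y) + (4:ℝ) • v (x - y) + (24:ℝ) • v y - (6:ℝ) • v x := by
    intro x y
    have e := hD x y
    simp only [DR, hs, h3] at e
    linear_combination (norm := module) (1/3 : ℝ) • e
  intro x y
  have e4 := hdag ((2:ℝ) • x) y
  have q1 : (2:ℝ) • x + (2:ℝ) • y = (2:ℝ) • (x + y) := by module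
  have q2 : (2:ℝ) • x - (2:ℝ) • y = (2:ℝ) • (x - y) := by module
  rw [q1, q2, hs, hs, hs] at e4
  simp only [← Nat.cast_smul_eq_nsmul ℝ, Nat.cast_ofNat]
  linear_combination (norm := module) (-1/4 : ℝ) • e4

lemma even_key (φ : X → Y) (he : ∀ z, φ (-z) = φ z) (h0 : φ 0 = 0) (x : X) :
    φ ((4:ℝ) • x) - (20:ℝ) • φ ((2:ℝ) • x) + (64:ℝ) • φ x
      = (1/3:ℝ) • DR φ ((2:ℝ) • x) x - (4/3:ℝ) • DR φ 0 x := by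
  simp only [DR]
  have b1 : (2:ℝ) • x + (2:ℝ) • x = (4:ℝ) • x := by module
  have b2 : (2:ℝ) • x - (2:ℝ) • x = (0:X) := by module
  have b3 : (2:ℝ) • x + x = (3:ℝ) • x := by module
  have b4 : (2:ℝ) • x - x = x := by module
  rw [b1, b2, b3, b4]
  simp only [zero_add, zero_sub, he, h0]
  module

lemma odd_key (φ : X → Y) (ho : ∀ z, φ (-z) = -φ z) (h0 : φ 0 = 0) (x : X) :
    φ ((2:ℝ) • x) - (8:ℝ) • φ x
      = (-(1/6):ℝ) • DR φ 0 x + (2/3:ℝ) • DR φ x x := by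
  simp only [DR]
  have c1 : x + (2:ℝ) • x = (3:ℝ) • x := by module
  have c2 : x - (2:ℝ) • x = -x := by module
  have c3 : x + x = (2:ℝ) • x := by module
  have c4 : x - x = (0:X) := by module
  rw [c1, c2, c3, c4]
  simp only [zero_add, zero_sub, ho, h0]
  module

lemma quadratic_scale (v : X → Y) (hv : IsQuadratic v) :
    ∀ x : X, v ((2:ℝ) • x) = (4:ℝ) • v x := by
  have h0 : v 0 = 0 := by
    have := hv 0 0
    simp only [add_zero, sub_zero, ← Nat.cast_smul_eq_nsmul ℝ, Nat.cast_ofNat] at this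
    linear_combination (norm := module) (-1/2 : ℝ) • this
  intro x
  have := hv x x
  rw [show x - x = 0 from sub_self x, h0, show x + x = (2:ℝ) • x from by module] at this
  simp only [← Nat.cast_smul_eq_nsmul ℝ, Nat.cast_ofNat] at this
  linear_combination (norm := module) this

lemma cubic_scale (v : X → Y) (hv : IsCubic v) :
    ∀ x : X, v ((2:ℝ) • x) = (8:ℝ) • v x := by
  intro x
  have := hv x 0
  simp only [add_zero, sub_zero] at this
  simp only [← Nat.cast_smul_eq_nsmul ℝ, Nat.cast_ofNat] at this
  linear_combination (norm := module) (1/2 : ℝ) • this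

lemma quartic_scale (v : X → Y) (hv : IsQuartic v) :
    ∀ x : X, v ((2:ℝ) • x) = (16:ℝ) • v x := by
  have h0 : v 0 = 0 := by
    have := hv 0 0
    simp only [add_zero, sub_zero, smul_zero, zero_add,
      ← Nat.cast_smul_eq_nsmul ℝ, Nat.cast_ofNat] at this
    linear_combination (norm := module) (-1/24 : ℝ) • this
  intro x
  have := hv x 0
  simp only [add_zero, sub_zero] at this
  rw [h0] at this
  simp only [smul_zero, sub_zero] at this
  simp only [← Nat.cast_smul_eq_nsmul ℝ, Nat.cast_ofNat] at this
  linear_combination (norm := module) (1/2 : ℝ) • this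

lemma iter_scale (v : X → Y) (K : ℝ) (hs : ∀ x : X, v ((2:ℝ) • x) = K • v x) :
    ∀ (n : ℕ) (x : X), v ((2:ℝ)^n • x) = (K^n : ℝ) • v x := by
  intro n
  induction n with
  | zero => intro x; simp
  | succ n ih =>
    intro x
    rw [show (2:ℝ)^(n+1) • x = (2:ℝ)^n • ((2:ℝ) • x) from by rw [smul_smul, ← pow_succ],
      ih, hs, smul_smul, ← pow_succ]

lemma vanish_of_pow_bound (a : Y) (M r : ℝ) (hr0 : 0 ≤ r) (hr1 : r < 1)
    (w : ℕ → Y) (hw : Tendsto w atTop (𝓝 0))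
    (h : ∀ n : ℕ, ‖a + w n‖ ≤ M * r^n) : a = 0 := by
  have h1 : Tendsto (fun n => ‖a + w n‖) atTop (𝓝 ‖a‖) := by
    have := (tendsto_const_nhds (x := a) (f := atTop)).add hw
    rw [add_zero] at this
    exact this.norm
  have h2 : Tendsto (fun n => M * r^n) atTop (𝓝 0) := by
    have := (tendsto_pow_atTop_nhds_zero_of_lt_one hr0 hr1).const_mul M
    simpa using this
  have := le_of_tendsto_of_tendsto' h1 h2 h
  exact norm_le_zero_iff.mp this

lemma triple_zero (p : ℝ) (hp0 : 0 ≤ p) (hp : p < 2) (M : ℝ)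
    (Q c q : X → Y) (hQ : IsQuadratic Q) (hc : IsCubic c) (hq : IsQuartic q)
    (hb : ∀ x : X, ‖Q x + c x + q x‖ ≤ M * ‖x‖^p) :
    ∀ x : X, Q x = 0 ∧ c x = 0 ∧ q x = 0 := by
  intro x
  have hA0 : (0:ℝ) < (2:ℝ)^p := Real.rpow_pos_of_pos (by norm_num) p
  have hA4 : (2:ℝ)^p < 4 := by
    have : (2:ℝ)^p < (2:ℝ)^(2:ℝ) := Real.rpow_lt_rpow_of_exponent_lt (by norm_num) hp
    simpa [show (2:ℝ)^(2:ℝ) = 4 from by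
      rw [show (2:ℝ) = ((2:ℕ):ℝ) from by norm_num, Real.rpow_natCast]; norm_num] using this
  have hQs := iter_scale Q 4 (quadratic_scale Q hQ)
  have hcs := iter_scale c 8 (cubic_scale c hc)
  have hqs := iter_scale q 16 (quartic_scale q hq)
  have bound : ∀ n : ℕ, ‖(4:ℝ)^n • Q x + (8:ℝ)^n • c x + (16:ℝ)^n • q x‖
      ≤ (M * ‖x‖^p) * ((2:ℝ)^p)^n := by
    intro n
    have := hb ((2:ℝ)^n • x)
    rw [hQs n x, hcs n x, hqs n x, norm_two_pow_smul] at this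
    calc ‖(4:ℝ)^n • Q x + (8:ℝ)^n • c x + (16:ℝ)^n • q x‖
        ≤ M * (((2:ℝ)^p)^n * ‖x‖^p) := this
      _ = (M * ‖x‖^p) * ((2:ℝ)^p)^n := by ring
  have hqx : q x = 0 := by
    apply vanish_of_pow_bound (q x) (M * ‖x‖^p) ((2:ℝ)^p/16) (by positivity)
      (by rw [div_lt_one (by norm_num)]; linarith)
      (fun n => ((1:ℝ)/4)^n • Q x + ((1:ℝ)/2)^n • c x)
    · have t1 : Tendsto (fun n : ℕ => ((1:ℝ)/4)^n • Q x) atTop (𝓝 ((0:ℝ) • Q x)) :=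
        (tendsto_pow_atTop_nhds_zero_of_lt_one (by norm_num) (by norm_num)).smul_const _
      have t2 : Tendsto (fun n : ℕ => ((1:ℝ)/2)^n • c x) atTop (𝓝 ((0:ℝ) • c x)) :=
        (tendsto_pow_atTop_nhds_zero_of_lt_one (by norm_num) (by norm_num)).smul_const _
      have := t1.add t2
      simpa using this
    · intro n
      have e : q x + (((1:ℝ)/4)^n • Q x + ((1:ℝ)/2)^n • c x)
          = ((16:ℝ)^n)⁻¹ • ((4:ℝ)^n • Q x + (8:ℝ)^n • c x + (16:ℝ)^n • q x) := by
        rw [smul_add, smul_add, smul_smul, smul_smul, smul_smul]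
        rw [show ((16:ℝ)^n)⁻¹ * 4^n = ((1:ℝ)/4)^n from by
              rw [show ((1:ℝ)/4) = (16:ℝ)⁻¹ * 4 from by norm_num, mul_pow, inv_pow],
            show ((16:ℝ)^n)⁻¹ * 8^n = ((1:ℝ)/2)^n from by
              rw [show ((1:ℝ)/2) = (16:ℝ)⁻¹ * 8 from by norm_num, mul_pow, inv_pow],
            inv_mul_cancel₀ (by positivity : ((16:ℝ)^n) ≠ 0), one_smul]
        abel
      rw [e, norm_smul, Real.norm_eq_abs, abs_of_pos (by positivity), div_pow]
      calc ((16:ℝ)^n)⁻¹ * ‖(4:ℝ)^n • Q x + (8:ℝ)^n • c x + (16:ℝ)^n • q x‖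
          ≤ ((16:ℝ)^n)⁻¹ * ((M * ‖x‖^p) * ((2:ℝ)^p)^n) :=
            mul_le_mul_of_nonneg_left (bound n) (by positivity)
        _ = M * ‖x‖^p * (((2:ℝ)^p)^n / 16^n) := by ring
  have hcx : c x = 0 := by
    apply vanish_of_pow_bound (c x) (M * ‖x‖^p) ((2:ℝ)^p/8) (by positivity)
      (by rw [div_lt_one (by norm_num)]; linarith)
      (fun n => ((1:ℝ)/2)^n • Q x)
    · have t1 : Tendsto (fun n : ℕ => ((1:ℝ)/2)^n • Q x) atTop (𝓝 ((0:ℝ) • Q x)) :=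
        (tendsto_pow_atTop_nhds_zero_of_lt_one (by norm_num) (by norm_num)).smul_const _
      simpa using t1
    · intro n
      have e : c x + ((1:ℝ)/2)^n • Q x
          = ((8:ℝ)^n)⁻¹ • ((4:ℝ)^n • Q x + (8:ℝ)^n • c x + (16:ℝ)^n • q x) := by
        rw [hqx, smul_zero, add_zero, smul_add, smul_smul, smul_smul]
        rw [show ((8:ℝ)^n)⁻¹ * 4^n = ((1:ℝ)/2)^n from by
              rw [show ((1:ℝ)/2) = (8:ℝ)⁻¹ * 4 from by norm_num, mul_pow, inv_pow],
            inv_mul_cancel₀ (by positivity : ((8:ℝ)^n) ≠ 0), one_smul]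
        abel
      rw [e, norm_smul, Real.norm_eq_abs, abs_of_pos (by positivity), div_pow]
      calc ((8:ℝ)^n)⁻¹ * ‖(4:ℝ)^n • Q x + (8:ℝ)^n • c x + (16:ℝ)^n • q x‖
          ≤ ((8:ℝ)^n)⁻¹ * ((M * ‖x‖^p) * ((2:ℝ)^p)^n) :=
            mul_le_mul_of_nonneg_left (bound n) (by positivity)
        _ = M * ‖x‖^p * (((2:ℝ)^p)^n / 8^n) := by ring
  have hQx : Q x = 0 := by
    apply vanish_of_pow_bound (Q x) (M * ‖x‖^p) ((2:ℝ)^p/4) (by positivity)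
      (by rw [div_lt_one (by norm_num)]; linarith)
      (fun _ => 0) tendsto_const_nhds
    intro n
    have e : Q x + 0 = ((4:ℝ)^n)⁻¹ • ((4:ℝ)^n • Q x + (8:ℝ)^n • c x + (16:ℝ)^n • q x) := by
      rw [hqx, hcx, smul_zero, smul_zero]
      simp only [add_zero]
      rw [smul_smul, inv_mul_cancel₀ (by positivity : ((4:ℝ)^n) ≠ 0), one_smul]
    rw [e, norm_smul, Real.norm_eq_abs, abs_of_pos (by positivity), div_pow]
    calc ((4:ℝ)^n)⁻¹ * ‖(4:ℝ)^n • Q x + (8:ℝ)^n • c x + (16:ℝ)^n • q x‖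
        ≤ ((4:ℝ)^n)⁻¹ * ((M * ‖x‖^p) * ((2:ℝ)^p)^n) :=
          mul_le_mul_of_nonneg_left (bound n) (by positivity)
      _ = M * ‖x‖^p * (((2:ℝ)^p)^n / 4^n) := by ring
  exact ⟨hQx, hcx, hqx⟩

lemma stab [CompleteSpace Y] (p : ℝ) (φ : X → Y) (K c θ' ε : ℝ)
    (hK : (2:ℝ)^p < K) (hK0 : (0:ℝ) < K)
    (h2 : ∀ x : X, ‖φ ((2:ℝ) • x) - K • φ x‖ ≤ c * ‖x‖ ^ p)
    (hDφ : ∀ x y : X, ‖DR φ x y‖ ≤ θ' * (‖x‖^p + ‖y‖^p))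
    (hpar : ∀ x : X, φ (-x) = ε • φ x) :
    ∃ T : X → Y, (∀ x : X, ‖φ x - T x‖ ≤ c / (K - (2:ℝ)^p) * ‖x‖^p) ∧
      (∀ x : X, T (-x) = ε • T x) ∧ (∀ x : X, T ((2:ℝ)•x) = K • T x) ∧
      (∀ x y : X, DR T x y = 0) := by
  have hA0 : (0:ℝ) < (2:ℝ)^p := Real.rpow_pos_of_pos (by norm_num) p
  have hKn0 : (K:ℝ) ≠ 0 := ne_of_gt hK0
  have hr1 : (2:ℝ)^p / K < 1 := (div_lt_one hK0).mpr hK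
  have hr0 : (0:ℝ) ≤ (2:ℝ)^p / K := le_of_lt (div_pos hA0 hK0)
  set u : X → ℕ → Y := fun x n => ((K^n : ℝ)⁻¹) • φ ((2:ℝ)^n • x) with hu
  have key : ∀ (x : X) (n : ℕ), dist (u x n) (u x (n+1))
      ≤ (c * ‖x‖^p / K) * ((2:ℝ)^p/K)^n := by
    intro x n
    rw [dist_eq_norm]
    have e : u x n - u x (n+1)
        = (K^(n+1) : ℝ)⁻¹ • (K • φ ((2:ℝ)^n • x) - φ ((2:ℝ) • ((2:ℝ)^n • x))) := by
      simp only [hu]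
      have p1 : (2:ℝ)^(n+1) • x = (2:ℝ) • ((2:ℝ)^n • x) := by
        rw [smul_smul, ← pow_succ']
      have p2 : ((K^(n+1):ℝ))⁻¹ * K = (K^n)⁻¹ := by
        rw [pow_succ, mul_inv, mul_assoc, inv_mul_cancel₀ hKn0, mul_one]
      rw [p1, smul_sub]
      congr 1
      rw [smul_smul, p2]
    rw [e, norm_smul, Real.norm_eq_abs, abs_of_pos (by positivity), norm_sub_rev]
    have hb := h2 ((2:ℝ)^n • x)
    rw [norm_two_pow_smul] at hb
    calc (K^(n+1) : ℝ)⁻¹ * ‖φ ((2:ℝ) • ((2:ℝ)^n • x)) - K • φ ((2:ℝ)^n • x)‖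
        ≤ (K^(n+1) : ℝ)⁻¹ * (c * (((2:ℝ)^p)^n * ‖x‖^p)) := by
          apply mul_le_mul_of_nonneg_left hb (by positivity)
      _ = (c * ‖x‖^p / K) * ((2:ℝ)^p/K)^n := by
          ring
  have hcauchy : ∀ x : X, CauchySeq (u x) := fun x =>
    cauchySeq_of_le_geometric _ _ hr1 (key x)
  choose T hT using fun x => cauchySeq_tendsto_of_complete (hcauchy x)
  refine ⟨T, ?_, ?_, ?_, ?_⟩
  · intro x
    have hb := dist_le_of_le_geometric_of_tendsto₀ _ _ hr1 (key x) (hT x)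
    simp only [hu, pow_zero, inv_one, one_smul] at hb
    rw [dist_eq_norm] at hb
    have heq : (c * ‖x‖^p / K) / (1 - (2:ℝ)^p/K) = c / (K - (2:ℝ)^p) * ‖x‖^p := by
      have h1 : K - (2:ℝ)^p ≠ 0 := ne_of_gt (by linarith)
      field_simp
    rwa [heq] at hb
  · intro x
    have h1 : Tendsto (u (-x)) atTop (𝓝 (T (-x))) := hT _
    have h2' : ∀ n, u (-x) n = ε • u x n := by
      intro n
      simp only [hu]
      rw [show (2:ℝ)^n • -x = -((2:ℝ)^n • x) from smul_neg _ _, hpar, smul_comm]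
    have h3 : Tendsto (fun n => ε • u x n) atTop (𝓝 (ε • T x)) := (hT x).const_smul ε
    rw [funext h2'] at h1
    exact tendsto_nhds_unique h1 h3
  · intro x
    have h1 : Tendsto (u ((2:ℝ)•x)) atTop (𝓝 (T ((2:ℝ)•x))) := hT _
    have h2' : ∀ n, u ((2:ℝ)•x) n = K • u x (n+1) := by
      intro n
      simp only [hu]
      have e1 : (2:ℝ)^n • (2:ℝ) • x = (2:ℝ)^(n+1) • x := by
        rw [smul_smul, ← pow_succ]
      rw [e1, smul_smul]
      congr 1
      field_simp
      rw [pow_succ]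
    have h3 : Tendsto (fun n => u x (n+1)) atTop (𝓝 (T x)) :=
      (hT x).comp (tendsto_add_atTop_nat 1)
    have h4 : Tendsto (fun n => K • u x (n+1)) atTop (𝓝 (K • T x)) := h3.const_smul K
    rw [funext h2'] at h1
    exact tendsto_nhds_unique h1 h4
  · intro x y
    have hcomb : Tendsto (fun n => (3:ℝ) • u (x + (2:ℝ)•y) n + (3:ℝ) • u (x - (2:ℝ)•y) n
        - (12:ℝ) • u (x+y) n - (12:ℝ) • u (x-y) n - (4:ℝ) • u ((3:ℝ)•y) n
        + (18:ℝ) • u ((2:ℝ)•y) n - (36:ℝ) • u y n + (18:ℝ) • u x n) atTop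
        (𝓝 (DR T x y)) := by
      unfold DR
      exact ((((((((hT _).const_smul (3:ℝ)).add ((hT _).const_smul (3:ℝ))).sub
        ((hT _).const_smul (12:ℝ))).sub ((hT _).const_smul (12:ℝ))).sub
        ((hT _).const_smul (4:ℝ))).add ((hT _).const_smul (18:ℝ))).sub
        ((hT _).const_smul (36:ℝ))).add ((hT _).const_smul (18:ℝ))
    have heq : ∀ n, (3:ℝ) • u (x + (2:ℝ)•y) n + (3:ℝ) • u (x - (2:ℝ)•y) n
        - (12:ℝ) • u (x+y) n - (12:ℝ) • u (x-y) n - (4:ℝ) • u ((3:ℝ)•y) n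
        + (18:ℝ) • u ((2:ℝ)•y) n - (36:ℝ) • u y n + (18:ℝ) • u x n
        = (K^n : ℝ)⁻¹ • DR φ ((2:ℝ)^n • x) ((2:ℝ)^n • y) := by
      intro n
      simp only [hu, DR]
      have e1 : (2:ℝ)^n • x + (2:ℝ) • ((2:ℝ)^n • y) = (2:ℝ)^n • (x + (2:ℝ)•y) := by module
      have e2 : (2:ℝ)^n • x - (2:ℝ) • ((2:ℝ)^n • y) = (2:ℝ)^n • (x - (2:ℝ)•y) := by module
      have e3 : (2:ℝ)^n • x + (2:ℝ)^n • y = (2:ℝ)^n • (x + y) := by module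
      have e4 : (2:ℝ)^n • x - (2:ℝ)^n • y = (2:ℝ)^n • (x - y) := by module
      have e5 : (3:ℝ) • ((2:ℝ)^n • y) = (2:ℝ)^n • ((3:ℝ) • y) := by module
      have e6 : (2:ℝ) • ((2:ℝ)^n • y) = (2:ℝ)^n • ((2:ℝ) • y) := by module
      rw [e1, e2, e3, e4, e5, e6]
      module
    have hzero : Tendsto (fun n => (K^n : ℝ)⁻¹ • DR φ ((2:ℝ)^n • x) ((2:ℝ)^n • y))
        atTop (𝓝 0) := by
      apply squeeze_zero_norm (a := fun n => θ' * (‖x‖^p + ‖y‖^p) * ((2:ℝ)^p/K)^n)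
      · intro n
        rw [norm_smul, Real.norm_eq_abs, abs_of_pos (by positivity)]
        have hb := hDφ ((2:ℝ)^n • x) ((2:ℝ)^n • y)
        rw [norm_two_pow_smul, norm_two_pow_smul] at hb
        calc (K^n : ℝ)⁻¹ * ‖DR φ ((2:ℝ)^n • x) ((2:ℝ)^n • y)‖
            ≤ (K^n : ℝ)⁻¹ * (θ' * (((2:ℝ)^p)^n * ‖x‖^p + ((2:ℝ)^p)^n * ‖y‖^p)) :=
              mul_le_mul_of_nonneg_left hb (by positivity)
          _ = θ' * (‖x‖^p + ‖y‖^p) * ((2:ℝ)^p/K)^n := by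
              ring
      · have := (tendsto_pow_atTop_nhds_zero_of_lt_one hr0 hr1).const_mul
          (θ' * (‖x‖^p + ‖y‖^p))
        simpa using this
    rw [funext heq] at hcomb
    exact tendsto_nhds_unique hcomb hzero


lemma const_ineq' (A u v w : ℝ) (h1 : 1 ≤ A) (hu : 1/3 ≤ u) (hv : 0 ≤ v) (hw : w ≤ 1/4) :
    (A+9)/36 * u + (A+9)/36 * v + (5/3) * w ≤ (33+A)/9 * (u + 4*v) + (3/2)*w := by
  nlinarith [mul_le_mul (show (7/2:ℝ) ≤ (33+A)/9 - (A+9)/36 by linarith) hu (by norm_num) (by linarith),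
    mul_nonneg (show (0:ℝ) ≤ (33+A)*4/9 - (A+9)/36 by linarith) hv]

end Helpers

set_option maxHeartbeats 2000000 in
theorem stmt_17 {X Y : Type*} [NormedAddCommGroup X] [NormedSpace ℝ X]
    [NormedAddCommGroup Y] [NormedSpace ℝ Y] [CompleteSpace Y]
    (p θ : ℝ) (hp0 : 0 ≤ p) (hp : p < 2) (hθ : 0 ≤ θ)
    (f : X → Y) (hf0 : f 0 = 0)
    (hbd : ∀ x y : X, ‖Dop f x y‖ ≤ θ * (‖x‖ ^ p + ‖y‖ ^ p)) :
    ∃ (Q₁ C Q₂ : X → Y),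
      IsQuadratic Q₁ ∧ IsCubic C ∧ IsQuartic Q₂ ∧
      (∀ x : X, ‖f x - Q₁ x - C x - Q₂ x‖ ≤
        ((33 + (2 : ℝ) ^ p) / 9 * (1 / (4 - (2 : ℝ) ^ p) + 4 / (16 - (2 : ℝ) ^ p)) +
          3 / (2 * (8 - (2 : ℝ) ^ p))) * θ * ‖x‖ ^ p) ∧
      (∀ Q₁' C' Q₂' : X → Y, IsQuadratic Q₁' → IsCubic C' → IsQuartic Q₂' →
        (∀ x : X, ‖f x - Q₁' x - C' x - Q₂' x‖ ≤
          ((33 + (2 : ℝ) ^ p) / 9 * (1 / (4 - (2 : ℝ) ^ p) + 4 / (16 - (2 : ℝ) ^ p)) +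
            3 / (2 * (8 - (2 : ℝ) ^ p))) * θ * ‖x‖ ^ p) →
        Q₁' = Q₁ ∧ C' = C ∧ Q₂' = Q₂) := by
  have hA0 : (0:ℝ) < (2:ℝ)^p := Real.rpow_pos_of_pos (by norm_num) p
  have hA1 : (1:ℝ) ≤ (2:ℝ)^p := by
    have := Real.rpow_le_rpow_of_exponent_le (show (1:ℝ) ≤ 2 by norm_num) hp0
    simpa using this
  have hA4 : (2:ℝ)^p < 4 := by
    have : (2:ℝ)^p < (2:ℝ)^(2:ℝ) := Real.rpow_lt_rpow_of_exponent_lt (by norm_num) hp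
    simpa [show (2:ℝ)^(2:ℝ) = 4 from by
      rw [show (2:ℝ) = ((2:ℕ):ℝ) from by norm_num, Real.rpow_natCast]; norm_num] using this
  have hDf : ∀ x y : X, ‖DR f x y‖ ≤ θ * (‖x‖^p + ‖y‖^p) := by
    intro x y; rw [DR_eq_Dop]; exact hbd x y
  -- even and odd parts
  set fe : X → Y := fun z => (2:ℝ)⁻¹ • (f z + f (-z)) with hfe_def
  set fo : X → Y := fun z => (2:ℝ)⁻¹ • (f z - f (-z)) with hfo_def
  have hfe_even : ∀ z, fe (-z) = fe z := by
    intro z; simp only [hfe_def]; rw [neg_neg, add_comm]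
  have hfo_odd : ∀ z, fo (-z) = -fo z := by
    intro z; simp only [hfo_def]; rw [neg_neg]; module
  have hfe0 : fe 0 = 0 := by simp [hfe_def, hf0]
  have hfo0 : fo 0 = 0 := by simp [hfo_def]
  have hDfe : ∀ x y : X, ‖DR fe x y‖ ≤ θ * (‖x‖^p + ‖y‖^p) := by
    intro x y
    have b1 := hDf x y
    have b2 := hDf (-x) (-y)
    rw [norm_neg, norm_neg] at b2
    calc ‖DR fe x y‖ = ‖(2:ℝ)⁻¹ • (DR f x y + DR f (-x) (-y))‖ := by
          rw [hfe_def, DR_even_part]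
      _ ≤ (2:ℝ)⁻¹ * (‖DR f x y‖ + ‖DR f (-x) (-y)‖) := by
          rw [norm_smul, Real.norm_eq_abs, abs_of_pos (by norm_num)]
          exact mul_le_mul_of_nonneg_left (norm_add_le _ _) (by norm_num)
      _ ≤ θ * (‖x‖^p + ‖y‖^p) := by linarith
  have hDfo : ∀ x y : X, ‖DR fo x y‖ ≤ θ * (‖x‖^p + ‖y‖^p) := by
    intro x y
    have b1 := hDf x y
    have b2 := hDf (-x) (-y)
    rw [norm_neg, norm_neg] at b2
    calc ‖DR fo x y‖ = ‖(2:ℝ)⁻¹ • (DR f x y - DR f (-x) (-y))‖ := by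
          rw [hfo_def, DR_odd_part]
      _ ≤ (2:ℝ)⁻¹ * (‖DR f x y‖ + ‖DR f (-x) (-y)‖) := by
          rw [norm_smul, Real.norm_eq_abs, abs_of_pos (by norm_num)]
          exact mul_le_mul_of_nonneg_left (norm_sub_le _ _) (by norm_num)
      _ ≤ θ * (‖x‖^p + ‖y‖^p) := by linarith
  -- the auxiliary even functions
  set g : X → Y := fun z => fe ((2:ℝ) • z) - (16:ℝ) • fe z with hg_def
  set h2f : X → Y := fun z => fe ((2:ℝ) • z) - (4:ℝ) • fe z with hh_def
  have ebound : ∀ x : X, ‖fe ((4:ℝ)•x) - (20:ℝ) • fe ((2:ℝ)•x) + (64:ℝ) • fe x‖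
      ≤ ((2:ℝ)^p+9)/3*θ * ‖x‖^p := by
    intro x
    rw [even_key fe hfe_even hfe0 x]
    have b1 := hDfe ((2:ℝ)•x) x
    rw [norm_two_smul] at b1
    have b2 := hDfe 0 x
    rw [norm_zero] at b2
    have h0p : (0:ℝ)^p ≤ ‖x‖^p := Real.rpow_le_rpow (le_refl 0) (norm_nonneg x) hp0
    calc ‖(1/3:ℝ) • DR fe ((2:ℝ)•x) x - (4/3:ℝ) • DR fe 0 x‖
        ≤ (1/3:ℝ) * ‖DR fe ((2:ℝ)•x) x‖ + (4/3:ℝ) * ‖DR fe 0 x‖ := by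
          refine le_trans (norm_sub_le _ _) ?_
          rw [norm_smul, norm_smul, Real.norm_eq_abs, Real.norm_eq_abs,
            abs_of_pos (by norm_num : (0:ℝ) < 1/3), abs_of_pos (by norm_num : (0:ℝ) < 4/3)]
      _ ≤ ((2:ℝ)^p+9)/3*θ * ‖x‖^p := by
          nlinarith [mul_le_mul_of_nonneg_left h0p hθ]
  have est_g : ∀ x : X, ‖g ((2:ℝ)•x) - (4:ℝ) • g x‖ ≤ ((2:ℝ)^p+9)/3*θ * ‖x‖^p := by
    intro x
    have e : g ((2:ℝ)•x) - (4:ℝ) • g x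
        = fe ((4:ℝ)•x) - (20:ℝ) • fe ((2:ℝ)•x) + (64:ℝ) • fe x := by
      simp only [hg_def]
      rw [show (2:ℝ) • ((2:ℝ) • x) = (4:ℝ) • x from by module]
      module
    rw [e]; exact ebound x
  have est_h : ∀ x : X, ‖h2f ((2:ℝ)•x) - (16:ℝ) • h2f x‖ ≤ ((2:ℝ)^p+9)/3*θ * ‖x‖^p := by
    intro x
    have e : h2f ((2:ℝ)•x) - (16:ℝ) • h2f x
        = fe ((4:ℝ)•x) - (20:ℝ) • fe ((2:ℝ)•x) + (64:ℝ) • fe x := by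
      simp only [hh_def]
      rw [show (2:ℝ) • ((2:ℝ) • x) = (4:ℝ) • x from by module]
      module
    rw [e]; exact ebound x
  have est_o : ∀ x : X, ‖fo ((2:ℝ)•x) - (8:ℝ) • fo x‖ ≤ (5/3:ℝ)*θ * ‖x‖^p := by
    intro x
    rw [odd_key fo hfo_odd hfo0 x]
    have b1 := hDfo 0 x
    rw [norm_zero] at b1
    have b2 := hDfo x x
    have h0p : (0:ℝ)^p ≤ ‖x‖^p := Real.rpow_le_rpow (le_refl 0) (norm_nonneg x) hp0
    calc ‖(-(1/6):ℝ) • DR fo 0 x + (2/3:ℝ) • DR fo x x‖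
        ≤ (1/6:ℝ) * ‖DR fo 0 x‖ + (2/3:ℝ) * ‖DR fo x x‖ := by
          refine le_trans (norm_add_le _ _) ?_
          rw [norm_smul, norm_smul, Real.norm_eq_abs, Real.norm_eq_abs,
            show |(-(1/6):ℝ)| = 1/6 from by norm_num, show |(2/3:ℝ)| = 2/3 from by norm_num]
      _ ≤ (5/3:ℝ)*θ * ‖x‖^p := by
          nlinarith [mul_le_mul_of_nonneg_left h0p hθ]
  -- DR bounds for g and h2f
  have hDg : ∀ x y : X, ‖DR g x y‖ ≤ ((2:ℝ)^p+16)*θ * (‖x‖^p + ‖y‖^p) := by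
    intro x y
    have e : DR g x y = DR fe ((2:ℝ)•x) ((2:ℝ)•y) - (16:ℝ) • DR fe x y := by
      simp only [hg_def]; exact DR_scale_sub fe 16 x y
    have b1 := hDfe ((2:ℝ)•x) ((2:ℝ)•y)
    rw [norm_two_smul, norm_two_smul] at b1
    have b2 := hDfe x y
    calc ‖DR g x y‖ = ‖DR fe ((2:ℝ)•x) ((2:ℝ)•y) - (16:ℝ) • DR fe x y‖ := by rw [e]
      _ ≤ ‖DR fe ((2:ℝ)•x) ((2:ℝ)•y)‖ + (16:ℝ) * ‖DR fe x y‖ := by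
          refine le_trans (norm_sub_le _ _) ?_
          rw [norm_smul, Real.norm_eq_abs, abs_of_pos (by norm_num : (0:ℝ) < 16)]
      _ ≤ ((2:ℝ)^p+16)*θ * (‖x‖^p + ‖y‖^p) := by nlinarith
  have hDh : ∀ x y : X, ‖DR h2f x y‖ ≤ ((2:ℝ)^p+4)*θ * (‖x‖^p + ‖y‖^p) := by
    intro x y
    have e : DR h2f x y = DR fe ((2:ℝ)•x) ((2:ℝ)•y) - (4:ℝ) • DR fe x y := by
      simp only [hh_def]; exact DR_scale_sub fe 4 x y
    have b1 := hDfe ((2:ℝ)•x) ((2:ℝ)•y)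
    rw [norm_two_smul, norm_two_smul] at b1
    have b2 := hDfe x y
    calc ‖DR h2f x y‖ = ‖DR fe ((2:ℝ)•x) ((2:ℝ)•y) - (4:ℝ) • DR fe x y‖ := by rw [e]
      _ ≤ ‖DR fe ((2:ℝ)•x) ((2:ℝ)•y)‖ + (4:ℝ) * ‖DR fe x y‖ := by
          refine le_trans (norm_sub_le _ _) ?_
          rw [norm_smul, Real.norm_eq_abs, abs_of_pos (by norm_num : (0:ℝ) < 4)]
      _ ≤ ((2:ℝ)^p+4)*θ * (‖x‖^p + ‖y‖^p) := by nlinarith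
  -- parity of g, h2f, fo
  have hg_even : ∀ x : X, g (-x) = (1:ℝ) • g x := by
    intro x
    simp only [hg_def]
    rw [show (2:ℝ) • (-x) = -((2:ℝ) • x) from smul_neg _ _, hfe_even, hfe_even, one_smul]
  have hh_even : ∀ x : X, h2f (-x) = (1:ℝ) • h2f x := by
    intro x
    simp only [hh_def]
    rw [show (2:ℝ) • (-x) = -((2:ℝ) • x) from smul_neg _ _, hfe_even, hfe_even, one_smul]
  have hfo_par : ∀ x : X, fo (-x) = (-1:ℝ) • fo x := by
    intro x; rw [hfo_odd x, ← neg_one_smul ℝ (fo x)]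
  -- stability limits
  obtain ⟨G, hGb, hGpar, hGs, hGD⟩ :=
    stab p g 4 (((2:ℝ)^p+9)/3*θ) (((2:ℝ)^p+16)*θ) 1 hA4 (by norm_num) est_g hDg hg_even
  obtain ⟨H, hHb, hHpar, hHs, hHD⟩ :=
    stab p h2f 16 (((2:ℝ)^p+9)/3*θ) (((2:ℝ)^p+4)*θ) 1 (by linarith) (by norm_num)
      est_h hDh hh_even
  obtain ⟨C, hCb, hCpar, hCs, hCD⟩ :=
    stab p fo 8 ((5/3:ℝ)*θ) θ (-1) (by linarith) (by norm_num) est_o hDfo hfo_par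
  have hGe : ∀ x, G (-x) = G x := fun x => by rw [hGpar x, one_smul]
  have hHe : ∀ x, H (-x) = H x := fun x => by rw [hHpar x, one_smul]
  have hCo : ∀ x, C (-x) = -C x := fun x => by rw [hCpar x, neg_one_smul]
  have hGquad : IsQuadratic G := quadratic_of G hGD hGe hGs
  have hHquart : IsQuartic H := quartic_of H hHD hHe hHs
  have hCcubic : IsCubic C := cubic_of C hCD hCo hCs
  set Q₁ : X → Y := fun x => (-(1/12):ℝ) • G x with hQ1_def
  set Q₂ : X → Y := fun x => ((1/12):ℝ) • H x with hQ2_def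
  have hQ1quad : IsQuadratic Q₁ := by
    intro x y
    have e := hGquad x y
    simp only [hQ1_def]
    simp only [← Nat.cast_smul_eq_nsmul ℝ, Nat.cast_ofNat] at e ⊢
    linear_combination (norm := module) (-(1/12):ℝ) • e
  have hQ2quart : IsQuartic Q₂ := by
    intro x y
    have e := hHquart x y
    simp only [hQ2_def]
    simp only [← Nat.cast_smul_eq_nsmul ℝ, Nat.cast_ofNat] at e ⊢
    linear_combination (norm := module) ((1/12):ℝ) • e
  -- the main estimate
  have hmain : ∀ x : X, ‖f x - Q₁ x - C x - Q₂ x‖ ≤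
      ((33 + (2 : ℝ) ^ p) / 9 * (1 / (4 - (2 : ℝ) ^ p) + 4 / (16 - (2 : ℝ) ^ p)) +
        3 / (2 * (8 - (2 : ℝ) ^ p))) * θ * ‖x‖ ^ p := by
    intro x
    have hid : f x - Q₁ x - C x - Q₂ x
        = (1/12:ℝ) • ((G x - g x) - (H x - h2f x)) + (fo x - C x) := by
      simp only [hQ1_def, hQ2_def, hg_def, hh_def, hfe_def, hfo_def]
      module
    have n1 : ‖G x - g x‖ ≤ ((2:ℝ)^p+9)/3*θ / (4 - (2:ℝ)^p) * ‖x‖^p := by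
      rw [norm_sub_rev]; exact hGb x
    have n2 : ‖H x - h2f x‖ ≤ ((2:ℝ)^p+9)/3*θ / (16 - (2:ℝ)^p) * ‖x‖^p := by
      rw [norm_sub_rev]; exact hHb x
    have n3 : ‖fo x - C x‖ ≤ (5/3:ℝ)*θ / (8 - (2:ℝ)^p) * ‖x‖^p := hCb x
    have h4A : (0:ℝ) < 4 - (2:ℝ)^p := by linarith
    have h16A : (0:ℝ) < 16 - (2:ℝ)^p := by linarith
    have h8A : (0:ℝ) < 8 - (2:ℝ)^p := by linarith
    have hu : (1:ℝ)/3 ≤ 1/(4-(2:ℝ)^p) := by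
      rw [div_le_div_iff₀ (by norm_num) h4A]; linarith
    have hv : (0:ℝ) ≤ 1/(16-(2:ℝ)^p) := by positivity
    have hw : 1/(8-(2:ℝ)^p) ≤ 1/4 := by
      rw [div_le_div_iff₀ h8A (by norm_num)]; linarith
    have hconst : (1/12:ℝ)*(((2:ℝ)^p+9)/3*θ/(4-(2:ℝ)^p) + ((2:ℝ)^p+9)/3*θ/(16-(2:ℝ)^p))
        + (5/3:ℝ)*θ/(8-(2:ℝ)^p)
        ≤ ((33 + (2 : ℝ) ^ p) / 9 * (1 / (4 - (2 : ℝ) ^ p) + 4 / (16 - (2 : ℝ) ^ p)) +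
          3 / (2 * (8 - (2 : ℝ) ^ p))) * θ := by
      have base := const_ineq' ((2:ℝ)^p) (1/(4-(2:ℝ)^p)) (1/(16-(2:ℝ)^p))
        (1/(8-(2:ℝ)^p)) hA1 hu hv hw
      have e1 : (1/12:ℝ)*(((2:ℝ)^p+9)/3*θ/(4-(2:ℝ)^p) + ((2:ℝ)^p+9)/3*θ/(16-(2:ℝ)^p))
          + (5/3:ℝ)*θ/(8-(2:ℝ)^p)
          = (((2:ℝ)^p+9)/36 * (1/(4-(2:ℝ)^p)) + ((2:ℝ)^p+9)/36 * (1/(16-(2:ℝ)^p))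
            + (5/3) * (1/(8-(2:ℝ)^p))) * θ := by ring
      have e2 : ((33 + (2 : ℝ) ^ p) / 9 * (1 / (4 - (2 : ℝ) ^ p) + 4 / (16 - (2 : ℝ) ^ p)) +
          3 / (2 * (8 - (2 : ℝ) ^ p))) * θ
          = ((33+(2:ℝ)^p)/9 * ((1/(4-(2:ℝ)^p)) + 4*(1/(16-(2:ℝ)^p)))
            + (3/2)*(1/(8-(2:ℝ)^p))) * θ := by
        rw [mul_comm (2:ℝ) (8-(2:ℝ)^p), div_mul_eq_div_div]
        ring
      rw [e1, e2]
      exact mul_le_mul_of_nonneg_right base hθ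
    calc ‖f x - Q₁ x - C x - Q₂ x‖
        = ‖(1/12:ℝ) • ((G x - g x) - (H x - h2f x)) + (fo x - C x)‖ := by rw [hid]
      _ ≤ (1/12:ℝ) * (‖G x - g x‖ + ‖H x - h2f x‖) + ‖fo x - C x‖ := by
          refine le_trans (norm_add_le _ _) ?_
          have : ‖(1/12:ℝ) • ((G x - g x) - (H x - h2f x))‖
              ≤ (1/12:ℝ) * (‖G x - g x‖ + ‖H x - h2f x‖) := by
            rw [norm_smul, Real.norm_eq_abs, abs_of_pos (by norm_num : (0:ℝ) < 1/12)]
            exact mul_le_mul_of_nonneg_left (norm_sub_le _ _) (by norm_num)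
          linarith
      _ ≤ ((1/12:ℝ)*(((2:ℝ)^p+9)/3*θ/(4-(2:ℝ)^p) + ((2:ℝ)^p+9)/3*θ/(16-(2:ℝ)^p))
            + (5/3:ℝ)*θ/(8-(2:ℝ)^p)) * ‖x‖^p := by nlinarith
      _ ≤ ((33 + (2 : ℝ) ^ p) / 9 * (1 / (4 - (2 : ℝ) ^ p) + 4 / (16 - (2 : ℝ) ^ p)) +
            3 / (2 * (8 - (2 : ℝ) ^ p))) * θ * ‖x‖ ^ p := by
          exact mul_le_mul_of_nonneg_right hconst (by positivity)
  refine ⟨Q₁, C, Q₂, hQ1quad, hCcubic, hQ2quart, hmain, ?_⟩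
  -- uniqueness
  intro Q₁' C' Q₂' h1 h2 h3 hb'
  have hQd : IsQuadratic (fun z => Q₁' z - Q₁ z) := by
    intro x y
    have e1 := h1 x y
    have e2 := hQ1quad x y
    simp only [← Nat.cast_smul_eq_nsmul ℝ, Nat.cast_ofNat] at e1 e2 ⊢
    linear_combination (norm := module) e1 - e2
  have hCd : IsCubic (fun z => C' z - C z) := by
    intro x y
    have e1 := h2 x y
    have e2 := hCcubic x y
    simp only [← Nat.cast_smul_eq_nsmul ℝ, Nat.cast_ofNat] at e1 e2 ⊢
    linear_combination (norm := module) e1 - e2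
  have hQ2d : IsQuartic (fun z => Q₂' z - Q₂ z) := by
    intro x y
    have e1 := h3 x y
    have e2 := hQ2quart x y
    simp only [← Nat.cast_smul_eq_nsmul ℝ, Nat.cast_ofNat] at e1 e2 ⊢
    linear_combination (norm := module) e1 - e2
  have hbd2 : ∀ x : X, ‖(Q₁' x - Q₁ x) + (C' x - C x) + (Q₂' x - Q₂ x)‖ ≤
      (((33 + (2 : ℝ) ^ p) / 9 * (1 / (4 - (2 : ℝ) ^ p) + 4 / (16 - (2 : ℝ) ^ p)) +
        3 / (2 * (8 - (2 : ℝ) ^ p))) * θ * 2) * ‖x‖ ^ p := by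
    intro x
    have e : (Q₁' x - Q₁ x) + (C' x - C x) + (Q₂' x - Q₂ x)
        = (f x - Q₁ x - C x - Q₂ x) - (f x - Q₁' x - C' x - Q₂' x) := by abel
    rw [e]
    have m1 := hmain x
    have m2 := hb' x
    have := norm_sub_le (f x - Q₁ x - C x - Q₂ x) (f x - Q₁' x - C' x - Q₂' x)
    nlinarith
  have hz := triple_zero p hp0 hp _ _ _ _ hQd hCd hQ2d hbd2
  refine ⟨funext fun x => ?_, funext fun x => ?_, funext fun x => ?_⟩
  · exact sub_eq_zero.mp (hz x).1
  · exact sub_eq_zero.mp (hz x).2.1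
  · exact sub_eq_zero.mp (hz x).2.2
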